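/- All complex roots of the polynomial x^j − x^{j−1} − x^{j−2} − ... − x − 1 other than the unique positive real root φ_j have modulus strictly less than 1 (in particular strictly less than φ_j), for every integer j ≥ 2. -/

import Mathlib

lemma aux_pow_sum_lt (j : ℕ) (hj : 2 ≤ j) (φ : ℝ) (hφpos : 0 < φ)
    (hφ : φ ^ j = ∑ k ∈ Finset.range j, φ ^ k) (r : ℝ) (hr : 0 < r) (hrφ : r < φ) :
    r ^ j < ∑ k ∈ Finset.range j, r ^ k := by
  have hφne : φ ≠ 0 := ne_of_gt hφpos
  have h1 : r ^ j = ∑ k ∈ Finset.range j, (r/φ)^j * φ^k := by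
    rw [← Finset.mul_sum, ← hφ, div_pow, div_mul_cancel₀]
    exact pow_ne_zero _ hφne
  rw [h1]
  apply Finset.sum_lt_sum_of_nonempty
  · exact Finset.nonempty_range_iff.mpr (by omega)
  · intro k hk
    have hkj : k < j := Finset.mem_range.mp hk
    have key : (r/φ)^j * φ^k = (r/φ)^(j-k) * r^k := by
      have hsplit : (r/φ)^j = (r/φ)^(j-k) * (r/φ)^k := by
        rw [← pow_add]; congr 1; omega
      rw [hsplit, mul_assoc]
      congr 1
      rw [div_pow, div_mul_cancel₀ _ (pow_ne_zero _ hφne)]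
    rw [key]
    have h2 : (r/φ)^(j-k) < 1 :=
      pow_lt_one₀ (by positivity) (by rw [div_lt_one hφpos]; exact hrφ) (by omega)
    nlinarith [pow_pos hr k]

lemma aux_pow_sum_gt (j : ℕ) (hj : 2 ≤ j) (φ : ℝ) (hφpos : 0 < φ)
    (hφ : φ ^ j = ∑ k ∈ Finset.range j, φ ^ k) (r : ℝ) (hrφ : φ < r) :
    ∑ k ∈ Finset.range j, r ^ k < r ^ j := by
  have hφne : φ ≠ 0 := ne_of_gt hφpos
  have hr : 0 < r := lt_trans hφpos hrφ
  have h1 : r ^ j = ∑ k ∈ Finset.range j, (r/φ)^j * φ^k := by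
    rw [← Finset.mul_sum, ← hφ, div_pow, div_mul_cancel₀]
    exact pow_ne_zero _ hφne
  rw [h1]
  apply Finset.sum_lt_sum_of_nonempty
  · exact Finset.nonempty_range_iff.mpr (by omega)
  · intro k hk
    have hkj : k < j := Finset.mem_range.mp hk
    have key : (r/φ)^j * φ^k = (r/φ)^(j-k) * r^k := by
      have hsplit : (r/φ)^j = (r/φ)^(j-k) * (r/φ)^k := by
        rw [← pow_add]; congr 1; omega
      rw [hsplit, mul_assoc]
      congr 1
      rw [div_pow, div_mul_cancel₀ _ (pow_ne_zero _ hφne)]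
    rw [key]
    have h2 : 1 < (r/φ)^(j-k) :=
      one_lt_pow₀ (by rw [lt_div_iff₀ hφpos]; linarith) (by omega)
    nlinarith [pow_pos hr k]

lemma aux_eq_abs (w : ℂ) (h : ‖w + 1‖ = ‖w‖ + 1) :
    w = (‖w‖ : ℂ) := by
  have h1 : Complex.normSq (w + 1) = (‖w‖ + 1)^2 := by
    rw [← Complex.sq_norm, h]
  have h2 : Complex.normSq (w + 1) = Complex.normSq w + 2 * w.re + 1 := by
    simp [Complex.normSq_apply, Complex.add_re, Complex.add_im]; ring
  have h3 : Complex.normSq w = w.re^2 + w.im^2 := by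
    simp [Complex.normSq_apply]; ring
  have h4 : (‖w‖)^2 = Complex.normSq w := Complex.sq_norm w
  have hre : w.re = ‖w‖ := by nlinarith
  have him : w.im = 0 := by nlinarith
  exact Complex.ext (by simp [hre]) (by simp [him])

theorem stmt_15 (j : ℕ) (hj : 2 ≤ j) (φ : ℝ) (hφpos : 0 < φ)
    (hφ : φ ^ j = ∑ k ∈ Finset.range j, φ ^ k) :
    ∀ z : ℂ, z ^ j = ∑ k ∈ Finset.range j, z ^ k → z ≠ (φ : ℂ) →
      ‖z‖ < 1 := by
  intro z hz hzφ
  by_contra hr1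
  push_neg at hr1
  set r := ‖z‖ with hrdef
  -- φ > 1
  have hφ1 : 1 < φ := by
    by_contra hle
    push_neg at hle
    have hterm : ∀ k ∈ Finset.range j, φ ^ j ≤ φ ^ k := fun k hk =>
      pow_le_pow_of_le_one hφpos.le hle (Finset.mem_range.mp hk).le
    have hsum : ∑ k ∈ Finset.range j, φ ^ j ≤ ∑ k ∈ Finset.range j, φ ^ k :=
      Finset.sum_le_sum hterm
    rw [Finset.sum_const, Finset.card_range, nsmul_eq_mul] at hsum
    have hpos : 0 < φ ^ j := pow_pos hφpos j
    have : (2 : ℝ) ≤ (j : ℝ) := by exact_mod_cast hj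
    nlinarith
  -- 2 z^j = z^(j+1) + 1
  have hgz : (∑ k ∈ Finset.range j, z ^ k) * (z - 1) = z ^ j - 1 := geom_sum_mul z j
  have hq : 2 * z ^ j = z ^ (j + 1) + 1 := by
    rw [← hz] at hgz
    linear_combination -hgz
  -- 2 φ^j = φ^(j+1) + 1
  have hgφ : (∑ k ∈ Finset.range j, φ ^ k) * (φ - 1) = φ ^ j - 1 := geom_sum_mul φ j
  have hqφ : 2 * φ ^ j = φ ^ (j + 1) + 1 := by
    rw [← hφ] at hgφ
    linear_combination -hgφ
  -- triangle inequality on hq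
  have habsq : ‖z ^ (j + 1) + 1‖ = 2 * r ^ j := by
    rw [← hq]; simp [hrdef, norm_mul, norm_pow]
  have htri : 2 * r ^ j ≤ r ^ (j + 1) + 1 := by
    calc 2 * r ^ j = ‖z ^ (j + 1) + 1‖ := habsq.symm
      _ ≤ ‖z ^ (j + 1)‖ + ‖1‖ := norm_add_le _ _
      _ = r ^ (j + 1) + 1 := by simp [hrdef, norm_pow]
  have hr0 : (0 : ℝ) < r := lt_of_lt_of_le one_pos hr1
  -- r ≤ φ
  have hsumabs : r ^ j ≤ ∑ k ∈ Finset.range j, r ^ k := by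
    calc r ^ j = ‖z ^ j‖ := by simp [hrdef, norm_pow]
      _ = ‖∑ k ∈ Finset.range j, z ^ k‖ := by rw [hz]
      _ ≤ ∑ k ∈ Finset.range j, ‖z ^ k‖ := norm_sum_le _ _
      _ = ∑ k ∈ Finset.range j, r ^ k := by simp [hrdef, norm_pow]
  have hrφ : r ≤ φ := by
    by_contra hgt
    push_neg at hgt
    exact absurd hsumabs (not_le.mpr (aux_pow_sum_gt j hj φ hφpos hφ r hgt))
  -- r = 1 or r = φ
  have hcases : r = 1 ∨ r = φ := by
    rcases eq_or_lt_of_le hr1 with h1 | h1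
    · exact Or.inl h1.symm
    rcases eq_or_lt_of_le hrφ with h2 | h2
    · exact Or.inr h2
    -- 1 < r < φ : contradiction with htri
    exfalso
    have hlt : r ^ j < ∑ k ∈ Finset.range j, r ^ k :=
      aux_pow_sum_lt j hj φ hφpos hφ r hr0 h2
    have hgr : (∑ k ∈ Finset.range j, r ^ k) * (r - 1) = r ^ j - 1 := geom_sum_mul r j
    have hps : r ^ (j + 1) = r ^ j * r := pow_succ r j
    nlinarith [mul_lt_mul_of_pos_right hlt (by linarith : (0:ℝ) < r - 1), hgr, htri, hps]
  -- equality case machinery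
  rcases hcases with hone | hphi
  · -- r = 1 : z^(j+1) = 1, hence z = 1, contradiction
    have heq : ‖z ^ (j + 1) + 1‖ = ‖z ^ (j + 1)‖ + 1 := by
      rw [habsq, hone, norm_pow, ← hrdef, hone]; norm_num
    have hw := aux_eq_abs (z ^ (j + 1)) heq
    have habs1 : ‖z ^ (j + 1)‖ = 1 := by
      rw [norm_pow, ← hrdef, hone, one_pow]
    rw [habs1] at hw
    push_cast at hw
    have hzj : z ^ j = 1 := by
      have h2 : (2 : ℂ) * z ^ j = 2 * 1 := by rw [hq, hw]; ring
      exact mul_left_cancel₀ two_ne_zero h2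
    have hz1 : z = 1 := by
      have : z * z ^ j = 1 := by rw [← pow_succ', hw]
      rwa [hzj, mul_one] at this
    rw [hz1] at hz
    simp at hz
    have : (1 : ℂ) = (j : ℂ) := by simpa using hz
    have : (j : ℂ) = (1 : ℂ) := this.symm
    have hj1 : j = 1 := by exact_mod_cast this
    omega
  · -- r = φ : z^(j+1) = φ^(j+1), hence z = φ, contradiction
    have heq : ‖z ^ (j + 1) + 1‖ = ‖z ^ (j + 1)‖ + 1 := by
      rw [habsq, hphi, norm_pow, ← hrdef, hphi]
      linarith [hqφ]
    have hw := aux_eq_abs (z ^ (j + 1)) heq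
    have habsφ : ‖z ^ (j + 1)‖ = φ ^ (j + 1) := by
      rw [norm_pow, ← hrdef, hphi]
    rw [habsφ] at hw
    push_cast at hw
    have hzj : z ^ j = (φ : ℂ) ^ j := by
      have h2 : (2 : ℂ) * z ^ j = 2 * (φ : ℂ) ^ j := by
        rw [hq, hw]
        have : ((φ : ℂ)) ^ (j + 1) + 1 = 2 * (φ : ℂ) ^ j := by
          exact_mod_cast congrArg (fun x : ℝ => (x : ℂ)) (by linarith [hqφ] : φ ^ (j+1) + 1 = 2 * φ ^ j)
        rw [this]
      exact mul_left_cancel₀ two_ne_zero h2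
    have hφjne : ((φ : ℂ)) ^ j ≠ 0 := pow_ne_zero _ (by exact_mod_cast hφpos.ne')
    have hzφ' : z = (φ : ℂ) := by
      have h1 : z * (φ : ℂ) ^ j = (φ : ℂ) * (φ : ℂ) ^ j := by
        calc z * (φ : ℂ) ^ j = z * z ^ j := by rw [hzj]
          _ = z ^ (j + 1) := (pow_succ' z j).symm
          _ = (φ : ℂ) ^ (j + 1) := hw
          _ = (φ : ℂ) * (φ : ℂ) ^ j := pow_succ' _ _
      exact mul_right_cancel₀ hφjne h1
    exact hzφ hzφ'
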